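/- Fix an integer m ≥ 2, reals h > 0, ε > 0, η ≥ 0, and A ≥ 1. Define, on the space of periodic grid functions φ : (ZMod m) × (ZMod m) → ℝ, F_{c,h}(φ) = h² Σ_{(i,j)} [ (ε⁻²/2) φ(i,j)⁶ + ((ε⁻² + η)/2) φ(i,j)² + (ε²/2) (Δ_h φ)(i,j)² ] + H_h(φ) and F_{e,h}(φ) = h² Σ_{(i,j)} (ε⁻² + η/4 + A) φ(i,j)⁴ + (1 + ηε²/2) h² Σ_{(i,j)} ((𝔇ₓφ)(i,j)² + (𝔇_yφ)(i,j)²) + A h² Σ_{(i,j)} ((𝔇ₓφ)(i,j)² + (𝔇_yφ)(i,j)²)². Then both F_{c,h} and F_{e,h} are strictly convex. -/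

import Mathlib

open Set

/-- The standard discrete Laplacian on periodic grid functions. -/
noncomputable def discreteLaplacian (m : ℕ) [NeZero m] (h : ℝ)
    (u : ZMod m × ZMod m → ℝ) : ZMod m × ZMod m → ℝ :=
  fun p =>
    (u (p.1 + 1, p.2) + u (p.1 - 1, p.2) + u (p.1, p.2 + 1) + u (p.1, p.2 - 1)
      - 4 * u p) / h ^ 2

/-- Center-to-vertex difference in the x direction. -/
noncomputable def Dx (m : ℕ) [NeZero m] (h : ℝ)
    (u : ZMod m × ZMod m → ℝ) : ZMod m × ZMod m → ℝ :=
  fun p => (u (p.1 + 1, p.2 + 1) - u (p.1, p.2 + 1) + u (p.1 + 1, p.2) - u p) / (2 * h)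

/-- Center-to-vertex difference in the y direction. -/
noncomputable def Dy (m : ℕ) [NeZero m] (h : ℝ)
    (u : ZMod m × ZMod m → ℝ) : ZMod m × ZMod m → ℝ :=
  fun p => (u (p.1 + 1, p.2 + 1) - u (p.1 + 1, p.2) + u (p.1, p.2 + 1) - u p) / (2 * h)

/-- Vertex-to-center average. -/
noncomputable def Av (m : ℕ) [NeZero m]
    (ν : ZMod m × ZMod m → ℝ) : ZMod m × ZMod m → ℝ :=
  fun p => (ν p + ν (p.1 - 1, p.2) + ν (p.1, p.2 - 1) + ν (p.1 - 1, p.2 - 1)) / 4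

/-- The discrete energy `H_h`. -/
noncomputable def Hh (m : ℕ) [NeZero m] (h A : ℝ)
    (φ : ZMod m × ZMod m → ℝ) : ℝ :=
  A * h ^ 2 * ∑ p : ZMod m × ZMod m, φ p ^ 4 +
    A * h ^ 2 * ∑ p : ZMod m × ZMod m, (Dx m h φ p ^ 2 + Dy m h φ p ^ 2) ^ 2 +
    3 * h ^ 2 * ∑ p : ZMod m × ZMod m,
      φ p ^ 2 * Av m (fun q => Dx m h φ q ^ 2 + Dy m h φ q ^ 2) p

/-- The convex part `F_{c,h}` of the discrete FCH energy. -/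
noncomputable def Fch (m : ℕ) [NeZero m] (h ε η A : ℝ)
    (φ : ZMod m × ZMod m → ℝ) : ℝ :=
  h ^ 2 * ∑ p : ZMod m × ZMod m,
      ((ε ^ 2)⁻¹ / 2 * φ p ^ 6 + ((ε ^ 2)⁻¹ + η) / 2 * φ p ^ 2 +
        ε ^ 2 / 2 * discreteLaplacian m h φ p ^ 2) +
    Hh m h A φ

/-- The concave part `F_{e,h}` of the discrete FCH energy. -/
noncomputable def Feh (m : ℕ) [NeZero m] (h ε η A : ℝ)
    (φ : ZMod m × ZMod m → ℝ) : ℝ :=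
  h ^ 2 * ∑ p : ZMod m × ZMod m, ((ε ^ 2)⁻¹ + η / 4 + A) * φ p ^ 4 +
    (1 + η * ε ^ 2 / 2) * (h ^ 2 * ∑ p : ZMod m × ZMod m,
      (Dx m h φ p ^ 2 + Dy m h φ p ^ 2)) +
    A * (h ^ 2 * ∑ p : ZMod m × ZMod m, (Dx m h φ p ^ 2 + Dy m h φ p ^ 2) ^ 2)

/-! ### Auxiliary convexity lemmas -/

section helpers
variable {E : Type*} [AddCommGroup E] [Module ℝ E]

lemma convexOn_pow_comp (f : E →ₗ[ℝ] ℝ) {n : ℕ} (hn : Even n) :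
    ConvexOn ℝ (univ : Set E) fun x => f x ^ n := by
  have := (hn.convexOn_pow (𝕜 := ℝ)).comp_affineMap f.toAffineMap
  simpa [Function.comp_def] using this

lemma convexOn_const_mul_pow4 (c : ℝ) (hc : 0 ≤ c) (f : E →ₗ[ℝ] ℝ) :
    ConvexOn ℝ (univ : Set E) fun φ => c * f φ ^ 4 := by
  simpa [smul_eq_mul] using (convexOn_pow_comp f (⟨2, rfl⟩ : Even 4)).smul hc

lemma convexOn_finset_sum {ι : Type*} (t : Finset ι) {f : ι → E → ℝ}
    (hf : ∀ i ∈ t, ConvexOn ℝ (univ : Set E) (f i)) :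
    ConvexOn ℝ (univ : Set E) fun x => ∑ i ∈ t, f i x := by
  classical
  induction t using Finset.induction_on with
  | empty => simpa using convexOn_const (0:ℝ) convex_univ
  | insert _ _ hnot ih =>
      rename_i a s
      simp only [Finset.sum_insert hnot]
      exact (hf a (Finset.mem_insert_self a s)).add
        (ih fun i hi => hf i (Finset.mem_insert_of_mem hi))

lemma strictConvexOn_const_mul {s : Set E} {f : E → ℝ} {c : ℝ} (hc : 0 < c)
    (hf : StrictConvexOn ℝ s f) : StrictConvexOn ℝ s fun x => c * f x := by
  refine ⟨hf.1, fun x hx y hy hxy a b ha hb hab => ?_⟩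
  have h2 := mul_lt_mul_of_pos_left (hf.2 hx hy hxy ha hb hab) hc
  calc c * f (a • x + b • y) < c * (a • f x + b • f y) := h2
    _ = a • (c * f x) + b • (c * f y) := by simp [smul_eq_mul]; ring

lemma strictConvexOn_sum_comp {ι : Type*} [Fintype ι] [Nonempty ι] {g : ℝ → ℝ}
    (hg : StrictConvexOn ℝ (univ : Set ℝ) g) :
    StrictConvexOn ℝ (univ : Set (ι → ℝ)) fun φ => ∑ p, g (φ p) := by
  refine ⟨convex_univ, fun x _ y _ hxy a b ha hb hab => ?_⟩
  obtain ⟨p₀, hp₀⟩ := Function.ne_iff.mp hxy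
  have hle : ∀ p ∈ Finset.univ (α := ι),
      g ((a • x + b • y) p) ≤ a * g (x p) + b * g (y p) := by
    intro p _
    have := hg.convexOn.2 (mem_univ (x p)) (mem_univ (y p)) ha.le hb.le hab
    simpa [smul_eq_mul] using this
  have hlt : g ((a • x + b • y) p₀) < a * g (x p₀) + b * g (y p₀) := by
    have := hg.2 (mem_univ (x p₀)) (mem_univ (y p₀)) hp₀ ha hb hab
    simpa [smul_eq_mul] using this
  calc (∑ p, g ((a • x + b • y) p)) < ∑ p, (a * g (x p) + b * g (y p)) :=
        Finset.sum_lt_sum hle ⟨p₀, Finset.mem_univ _, hlt⟩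
    _ = a • ∑ p, g (x p) + b • ∑ p, g (y p) := by
        simp [Finset.sum_add_distrib, Finset.mul_sum, smul_eq_mul]

lemma cell_convex (X₁ X₂ X₃ X₄ U V : E →ₗ[ℝ] ℝ) :
    ConvexOn ℝ (univ : Set E) fun φ =>
      (X₁ φ ^ 4 + X₂ φ ^ 4 + X₃ φ ^ 4 + X₄ φ ^ 4) / 4
        + (U φ ^ 2 + V φ ^ 2) ^ 2
        + 3 / 4 * (X₁ φ ^ 2 + X₂ φ ^ 2 + X₃ φ ^ 2 + X₄ φ ^ 2) * (U φ ^ 2 + V φ ^ 2) := by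
  have key : (fun φ : E =>
      (X₁ φ ^ 4 + X₂ φ ^ 4 + X₃ φ ^ 4 + X₄ φ ^ 4) / 4
        + (U φ ^ 2 + V φ ^ 2) ^ 2
        + 3 / 4 * (X₁ φ ^ 2 + X₂ φ ^ 2 + X₃ φ ^ 2 + X₄ φ ^ 2) * (U φ ^ 2 + V φ ^ 2))
      = fun φ : E =>
      1/16 * (X₁ + U) φ ^ 4 + 1/16 * (X₁ - U) φ ^ 4 + 1/16 * (X₁ + V) φ ^ 4 + 1/16 * (X₁ - V) φ ^ 4
      + 1/16 * (X₂ + U) φ ^ 4 + 1/16 * (X₂ - U) φ ^ 4 + 1/16 * (X₂ + V) φ ^ 4 + 1/16 * (X₂ - V) φ ^ 4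
      + 1/16 * (X₃ + U) φ ^ 4 + 1/16 * (X₃ - U) φ ^ 4 + 1/16 * (X₃ + V) φ ^ 4 + 1/16 * (X₃ - V) φ ^ 4
      + 1/16 * (X₄ + U) φ ^ 4 + 1/16 * (X₄ - U) φ ^ 4 + 1/16 * (X₄ + V) φ ^ 4 + 1/16 * (X₄ - V) φ ^ 4
      + 1/6 * (U + V) φ ^ 4 + 1/6 * (U - V) φ ^ 4 + 1/6 * U φ ^ 4 + 1/6 * V φ ^ 4 := by
    funext φ
    simp only [LinearMap.add_apply, LinearMap.sub_apply]
    ring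
  rw [key]
  have c16 : (0:ℝ) ≤ 1/16 := by norm_num
  have c6 : (0:ℝ) ≤ 1/6 := by norm_num
  exact (((((((((((((((((((convexOn_const_mul_pow4 _ c16 (X₁ + U)).add
    (convexOn_const_mul_pow4 _ c16 (X₁ - U))).add (convexOn_const_mul_pow4 _ c16 (X₁ + V))).add
    (convexOn_const_mul_pow4 _ c16 (X₁ - V))).add (convexOn_const_mul_pow4 _ c16 (X₂ + U))).add
    (convexOn_const_mul_pow4 _ c16 (X₂ - U))).add (convexOn_const_mul_pow4 _ c16 (X₂ + V))).add
    (convexOn_const_mul_pow4 _ c16 (X₂ - V))).add (convexOn_const_mul_pow4 _ c16 (X₃ + U))).add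
    (convexOn_const_mul_pow4 _ c16 (X₃ - U))).add (convexOn_const_mul_pow4 _ c16 (X₃ + V))).add
    (convexOn_const_mul_pow4 _ c16 (X₃ - V))).add (convexOn_const_mul_pow4 _ c16 (X₄ + U))).add
    (convexOn_const_mul_pow4 _ c16 (X₄ - U))).add (convexOn_const_mul_pow4 _ c16 (X₄ + V))).add
    (convexOn_const_mul_pow4 _ c16 (X₄ - V))).add (convexOn_const_mul_pow4 _ c6 (U + V))).add
    (convexOn_const_mul_pow4 _ c6 (U - V))).add (convexOn_const_mul_pow4 _ c6 U)).add
    (convexOn_const_mul_pow4 _ c6 V)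

lemma convexOn_normsq_sq (U V : E →ₗ[ℝ] ℝ) :
    ConvexOn ℝ (univ : Set E) fun φ => (U φ ^ 2 + V φ ^ 2) ^ 2 := by
  have key : (fun φ : E => (U φ ^ 2 + V φ ^ 2) ^ 2) = fun φ : E =>
      2/3 * U φ ^ 4 + 2/3 * V φ ^ 4 + 1/6 * (U + V) φ ^ 4 + 1/6 * (U - V) φ ^ 4 := by
    funext φ
    simp only [LinearMap.add_apply, LinearMap.sub_apply]
    ring
  rw [key]
  have c3 : (0:ℝ) ≤ 2/3 := by norm_num
  have c6 : (0:ℝ) ≤ 1/6 := by norm_num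
  exact (((convexOn_const_mul_pow4 _ c3 U).add (convexOn_const_mul_pow4 _ c3 V)).add
    (convexOn_const_mul_pow4 _ c6 (U + V))).add (convexOn_const_mul_pow4 _ c6 (U - V))

end helpers

/-! ### Linear maps given by evaluation and discrete differences -/

/-- `Dx` at a fixed point, as a linear map in `φ`. -/
noncomputable def DxL (m : ℕ) [NeZero m] (h : ℝ) (q : ZMod m × ZMod m) :
    (ZMod m × ZMod m → ℝ) →ₗ[ℝ] ℝ where
  toFun φ := Dx m h φ q
  map_add' φ ψ := by simp [Dx]; ring
  map_smul' c φ := by simp [Dx, smul_eq_mul]; ring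

/-- `Dy` at a fixed point, as a linear map in `φ`. -/
noncomputable def DyL (m : ℕ) [NeZero m] (h : ℝ) (q : ZMod m × ZMod m) :
    (ZMod m × ZMod m → ℝ) →ₗ[ℝ] ℝ where
  toFun φ := Dy m h φ q
  map_add' φ ψ := by simp [Dy]; ring
  map_smul' c φ := by simp [Dy, smul_eq_mul]; ring

/-- the discrete Laplacian at a fixed point, as a linear map in `φ`. -/
noncomputable def LapL (m : ℕ) [NeZero m] (h : ℝ) (q : ZMod m × ZMod m) :
    (ZMod m × ZMod m → ℝ) →ₗ[ℝ] ℝ where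
  toFun φ := discreteLaplacian m h φ q
  map_add' φ ψ := by simp [discreteLaplacian]; ring
  map_smul' c φ := by simp [discreteLaplacian, smul_eq_mul]; ring

/-- evaluation at a fixed point, as a linear map. -/
noncomputable def evL (m : ℕ) [NeZero m] (q : ZMod m × ZMod m) :
    (ZMod m × ZMod m → ℝ) →ₗ[ℝ] ℝ := LinearMap.proj q

/-! ### Shift-invariance of sums over the periodic grid -/

def eFst (m : ℕ) [NeZero m] : (ZMod m × ZMod m) ≃ (ZMod m × ZMod m) :=
  (Equiv.addRight (1 : ZMod m)).prodCongr (Equiv.refl _)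

def eSnd (m : ℕ) [NeZero m] : (ZMod m × ZMod m) ≃ (ZMod m × ZMod m) :=
  (Equiv.refl _).prodCongr (Equiv.addRight (1 : ZMod m))

section shifts
variable {m : ℕ} [NeZero m]

lemma sum_shift_fst (f : ZMod m × ZMod m → ℝ) :
    ∑ p : ZMod m × ZMod m, f (p.1 + 1, p.2) = ∑ p : ZMod m × ZMod m, f p :=
  Fintype.sum_equiv (eFst m) _ _ fun p => by
    cases p with | mk i j => simp [eFst, Equiv.prodCongr]

lemma sum_shift_snd (f : ZMod m × ZMod m → ℝ) :
    ∑ p : ZMod m × ZMod m, f (p.1, p.2 + 1) = ∑ p : ZMod m × ZMod m, f p :=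
  Fintype.sum_equiv (eSnd m) _ _ fun p => by
    cases p with | mk i j => simp [eSnd, Equiv.prodCongr]

lemma sum_shift_both (f : ZMod m × ZMod m → ℝ) :
    ∑ p : ZMod m × ZMod m, f (p.1 + 1, p.2 + 1) = ∑ p : ZMod m × ZMod m, f p := by
  rw [← sum_shift_snd f]
  exact sum_shift_fst (fun p => f (p.1, p.2 + 1))

lemma cross_fst (s w : ZMod m × ZMod m → ℝ) :
    ∑ p : ZMod m × ZMod m, s p * w (p.1 - 1, p.2)
      = ∑ p : ZMod m × ZMod m, s (p.1 + 1, p.2) * w p :=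
  (Fintype.sum_equiv (eFst m) (fun p => s (p.1 + 1, p.2) * w p)
    (fun p => s p * w (p.1 - 1, p.2)) fun p => by
      cases p with | mk i j => simp [eFst, Equiv.prodCongr]).symm

lemma cross_snd (s w : ZMod m × ZMod m → ℝ) :
    ∑ p : ZMod m × ZMod m, s p * w (p.1, p.2 - 1)
      = ∑ p : ZMod m × ZMod m, s (p.1, p.2 + 1) * w p :=
  (Fintype.sum_equiv (eSnd m) (fun p => s (p.1, p.2 + 1) * w p)
    (fun p => s p * w (p.1, p.2 - 1)) fun p => by
      cases p with | mk i j => simp [eSnd, Equiv.prodCongr]).symm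

lemma cross_both (s w : ZMod m × ZMod m → ℝ) :
    ∑ p : ZMod m × ZMod m, s p * w (p.1 - 1, p.2 - 1)
      = ∑ p : ZMod m × ZMod m, s (p.1 + 1, p.2 + 1) * w p := by
  have h1 := cross_fst (m := m) s (fun r => w (r.1, r.2 - 1))
  have h2 := cross_snd (m := m) (fun r => s (r.1 + 1, r.2)) w
  exact h1.trans h2

end shifts

/-- The per-cell energy density of `H_h` (with `A = 1`). -/
noncomputable def cellFun (m : ℕ) [NeZero m] (h : ℝ) (φ : ZMod m × ZMod m → ℝ)
    (q : ZMod m × ZMod m) : ℝ :=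
  (φ q ^ 4 + φ (q.1 + 1, q.2) ^ 4 + φ (q.1, q.2 + 1) ^ 4 + φ (q.1 + 1, q.2 + 1) ^ 4) / 4
    + (Dx m h φ q ^ 2 + Dy m h φ q ^ 2) ^ 2
    + 3 / 4 * (φ q ^ 2 + φ (q.1 + 1, q.2) ^ 2 + φ (q.1, q.2 + 1) ^ 2 + φ (q.1 + 1, q.2 + 1) ^ 2)
        * (Dx m h φ q ^ 2 + Dy m h φ q ^ 2)

lemma Hh_eq {m : ℕ} [NeZero m] (h A : ℝ) (φ : ZMod m × ZMod m → ℝ) :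
    Hh m h A φ = h ^ 2 * ∑ q : ZMod m × ZMod m, cellFun m h φ q
      + ((A - 1) * h ^ 2 * ∑ p : ZMod m × ZMod m, φ p ^ 4
        + (A - 1) * h ^ 2 * ∑ q : ZMod m × ZMod m, (Dx m h φ q ^ 2 + Dy m h φ q ^ 2) ^ 2) := by
  set ν : ZMod m × ZMod m → ℝ := fun q => Dx m h φ q ^ 2 + Dy m h φ q ^ 2 with hν
  have hX : ∑ p : ZMod m × ZMod m, φ p ^ 2 * Av m ν p
      = 1/4 * ∑ p : ZMod m × ZMod m, φ p ^ 2 * ν p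
        + 1/4 * ∑ p : ZMod m × ZMod m, φ (p.1 + 1, p.2) ^ 2 * ν p
        + 1/4 * ∑ p : ZMod m × ZMod m, φ (p.1, p.2 + 1) ^ 2 * ν p
        + 1/4 * ∑ p : ZMod m × ZMod m, φ (p.1 + 1, p.2 + 1) ^ 2 * ν p := by
    calc ∑ p : ZMod m × ZMod m, φ p ^ 2 * Av m ν p
        = ∑ p : ZMod m × ZMod m, (1/4 * (φ p ^ 2 * ν p) + 1/4 * (φ p ^ 2 * ν (p.1 - 1, p.2))
            + 1/4 * (φ p ^ 2 * ν (p.1, p.2 - 1)) + 1/4 * (φ p ^ 2 * ν (p.1 - 1, p.2 - 1))) :=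
          Finset.sum_congr rfl fun p _ => by simp only [Av]; ring
      _ = _ := by
          simp only [Finset.sum_add_distrib, ← Finset.mul_sum]
          rw [cross_fst, cross_snd, cross_both]
  have hC : ∑ q : ZMod m × ZMod m, cellFun m h φ q
      = 1/4 * ∑ p : ZMod m × ZMod m, φ p ^ 4
        + 1/4 * ∑ p : ZMod m × ZMod m, φ (p.1 + 1, p.2) ^ 4
        + 1/4 * ∑ p : ZMod m × ZMod m, φ (p.1, p.2 + 1) ^ 4
        + 1/4 * ∑ p : ZMod m × ZMod m, φ (p.1 + 1, p.2 + 1) ^ 4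
        + ∑ p : ZMod m × ZMod m, ν p ^ 2
        + 3/4 * ∑ p : ZMod m × ZMod m, φ p ^ 2 * ν p
        + 3/4 * ∑ p : ZMod m × ZMod m, φ (p.1 + 1, p.2) ^ 2 * ν p
        + 3/4 * ∑ p : ZMod m × ZMod m, φ (p.1, p.2 + 1) ^ 2 * ν p
        + 3/4 * ∑ p : ZMod m × ZMod m, φ (p.1 + 1, p.2 + 1) ^ 2 * ν p := by
    calc ∑ q : ZMod m × ZMod m, cellFun m h φ q
        = ∑ q : ZMod m × ZMod m, (1/4 * φ q ^ 4 + 1/4 * φ (q.1 + 1, q.2) ^ 4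
            + 1/4 * φ (q.1, q.2 + 1) ^ 4 + 1/4 * φ (q.1 + 1, q.2 + 1) ^ 4
            + ν q ^ 2
            + 3/4 * (φ q ^ 2 * ν q) + 3/4 * (φ (q.1 + 1, q.2) ^ 2 * ν q)
            + 3/4 * (φ (q.1, q.2 + 1) ^ 2 * ν q) + 3/4 * (φ (q.1 + 1, q.2 + 1) ^ 2 * ν q)) :=
          Finset.sum_congr rfl fun q _ => by simp only [cellFun, hν]; ring
      _ = _ := by simp only [Finset.sum_add_distrib, ← Finset.mul_sum]
  have e1 : ∑ p : ZMod m × ZMod m, φ (p.1 + 1, p.2) ^ 4 = ∑ p : ZMod m × ZMod m, φ p ^ 4 :=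
    sum_shift_fst (fun r => φ r ^ 4)
  have e2 : ∑ p : ZMod m × ZMod m, φ (p.1, p.2 + 1) ^ 4 = ∑ p : ZMod m × ZMod m, φ p ^ 4 :=
    sum_shift_snd (fun r => φ r ^ 4)
  have e3 : ∑ p : ZMod m × ZMod m, φ (p.1 + 1, p.2 + 1) ^ 4 = ∑ p : ZMod m × ZMod m, φ p ^ 4 :=
    sum_shift_both (fun r => φ r ^ 4)
  rw [Hh, hX, hC, e1, e2, e3]
  ring

/-- `H_h` is convex for `A ≥ 1`. -/
lemma Hh_convex {m : ℕ} [NeZero m] (h A : ℝ) (hA : 1 ≤ A) :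
    ConvexOn ℝ (univ : Set (ZMod m × ZMod m → ℝ)) (Hh m h A) := by
  have hA' : (0:ℝ) ≤ (A - 1) * h ^ 2 := mul_nonneg (by linarith) (sq_nonneg h)
  have hcell : ∀ q : ZMod m × ZMod m,
      ConvexOn ℝ (univ : Set (ZMod m × ZMod m → ℝ)) fun φ => cellFun m h φ q := fun q =>
    cell_convex (evL m q) (evL m (q.1 + 1, q.2)) (evL m (q.1, q.2 + 1)) (evL m (q.1 + 1, q.2 + 1))
      (DxL m h q) (DyL m h q)
  have hrw : Hh m h A = fun φ =>
      h ^ 2 * ∑ q : ZMod m × ZMod m, cellFun m h φ q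
      + ((A - 1) * h ^ 2 * ∑ p : ZMod m × ZMod m, φ p ^ 4
        + (A - 1) * h ^ 2 * ∑ q : ZMod m × ZMod m, (Dx m h φ q ^ 2 + Dy m h φ q ^ 2) ^ 2) :=
    funext fun φ => Hh_eq h A φ
  rw [hrw]
  refine ConvexOn.add ?_ (ConvexOn.add ?_ ?_)
  · simpa [smul_eq_mul] using
      (convexOn_finset_sum Finset.univ fun q _ => hcell q).smul (sq_nonneg h)
  · have : ConvexOn ℝ (univ : Set (ZMod m × ZMod m → ℝ))
        fun φ => ∑ p : ZMod m × ZMod m, evL m p φ ^ 4 :=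
      convexOn_finset_sum Finset.univ fun p _ => convexOn_pow_comp _ (⟨2, rfl⟩ : Even 4)
    simpa [smul_eq_mul, evL] using this.smul hA'
  · have : ConvexOn ℝ (univ : Set (ZMod m × ZMod m → ℝ))
        fun φ => ∑ q : ZMod m × ZMod m, (DxL m h q φ ^ 2 + DyL m h q φ ^ 2) ^ 2 :=
      convexOn_finset_sum Finset.univ fun q _ => convexOn_normsq_sq (DxL m h q) (DyL m h q)
    simpa [smul_eq_mul, DxL, DyL] using this.smul hA'

theorem Fch_Feh_strictly_convex (m : ℕ) [NeZero m] (hm : 2 ≤ m)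
    (h ε η A : ℝ) (hh : 0 < h) (hε : 0 < ε) (hη : 0 ≤ η) (hA : 1 ≤ A) :
    StrictConvexOn ℝ (univ : Set (ZMod m × ZMod m → ℝ)) (Fch m h ε η A) ∧
      StrictConvexOn ℝ (univ : Set (ZMod m × ZMod m → ℝ)) (Feh m h ε η A) := by
  have hh2 : (0:ℝ) < h ^ 2 := by positivity
  have hε2 : (0:ℝ) < (ε ^ 2)⁻¹ := by positivity
  have hA0 : (0:ℝ) < A := by linarith
  constructor
  · -- Fch
    have hsplit : Fch m h ε η A = fun φ : ZMod m × ZMod m → ℝ =>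
        (∑ p : ZMod m × ZMod m, (((ε ^ 2)⁻¹ + η) / 2 * h ^ 2) * φ p ^ 2)
        + (((ε ^ 2)⁻¹ / 2 * h ^ 2 * ∑ p : ZMod m × ZMod m, φ p ^ 6
            + ε ^ 2 / 2 * h ^ 2 * ∑ p : ZMod m × ZMod m, discreteLaplacian m h φ p ^ 2)
          + Hh m h A φ) := by
      funext φ
      rw [Fch]
      simp only [Finset.sum_add_distrib, ← Finset.mul_sum]
      ring
    rw [hsplit]
    have hc2 : (0:ℝ) < ((ε ^ 2)⁻¹ + η) / 2 * h ^ 2 := by positivity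
    have hstrict : StrictConvexOn ℝ (univ : Set (ZMod m × ZMod m → ℝ))
        fun φ => ∑ p : ZMod m × ZMod m, (((ε ^ 2)⁻¹ + η) / 2 * h ^ 2) * φ p ^ 2 :=
      strictConvexOn_sum_comp (strictConvexOn_const_mul hc2
        (Even.strictConvexOn_pow (⟨1, rfl⟩ : Even 2) two_ne_zero))
    refine hstrict.add_convexOn (ConvexOn.add (ConvexOn.add ?_ ?_) (Hh_convex h A hA))
    · have : ConvexOn ℝ (univ : Set (ZMod m × ZMod m → ℝ))
          fun φ => ∑ p : ZMod m × ZMod m, evL m p φ ^ 6 :=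
        convexOn_finset_sum Finset.univ fun p _ => convexOn_pow_comp _ (⟨3, rfl⟩ : Even 6)
      simpa [smul_eq_mul, evL] using this.smul (by positivity : (0:ℝ) ≤ (ε ^ 2)⁻¹ / 2 * h ^ 2)
    · have : ConvexOn ℝ (univ : Set (ZMod m × ZMod m → ℝ))
          fun φ => ∑ p : ZMod m × ZMod m, LapL m h p φ ^ 2 :=
        convexOn_finset_sum Finset.univ fun p _ => convexOn_pow_comp _ (⟨1, rfl⟩ : Even 2)
      simpa [smul_eq_mul, LapL] using this.smul (by positivity : (0:ℝ) ≤ ε ^ 2 / 2 * h ^ 2)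
  · -- Feh
    have hsplit : Feh m h ε η A = fun φ : ZMod m × ZMod m → ℝ =>
        (∑ p : ZMod m × ZMod m, (((ε ^ 2)⁻¹ + η / 4 + A) * h ^ 2) * φ p ^ 4)
        + ((1 + η * ε ^ 2 / 2) * h ^ 2
              * ∑ p : ZMod m × ZMod m, (Dx m h φ p ^ 2 + Dy m h φ p ^ 2)
          + A * h ^ 2 * ∑ p : ZMod m × ZMod m, (Dx m h φ p ^ 2 + Dy m h φ p ^ 2) ^ 2) := by
      funext φ
      rw [Feh]
      simp only [← Finset.mul_sum]
      ring
    rw [hsplit]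
    have hc4 : (0:ℝ) < ((ε ^ 2)⁻¹ + η / 4 + A) * h ^ 2 := by positivity
    have hstrict : StrictConvexOn ℝ (univ : Set (ZMod m × ZMod m → ℝ))
        fun φ => ∑ p : ZMod m × ZMod m, (((ε ^ 2)⁻¹ + η / 4 + A) * h ^ 2) * φ p ^ 4 :=
      strictConvexOn_sum_comp (strictConvexOn_const_mul hc4
        (Even.strictConvexOn_pow (⟨2, rfl⟩ : Even 4) (by norm_num)))
    refine hstrict.add_convexOn (ConvexOn.add ?_ ?_)
    · have : ConvexOn ℝ (univ : Set (ZMod m × ZMod m → ℝ))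
          fun φ => ∑ p : ZMod m × ZMod m, (DxL m h p φ ^ 2 + DyL m h p φ ^ 2) :=
        convexOn_finset_sum Finset.univ fun p _ =>
          (convexOn_pow_comp (DxL m h p) (⟨1, rfl⟩ : Even 2)).add
            (convexOn_pow_comp (DyL m h p) (⟨1, rfl⟩ : Even 2))
      simpa [smul_eq_mul, DxL, DyL] using
        this.smul (by positivity : (0:ℝ) ≤ (1 + η * ε ^ 2 / 2) * h ^ 2)
    · have : ConvexOn ℝ (univ : Set (ZMod m × ZMod m → ℝ))
          fun φ => ∑ q : ZMod m × ZMod m, (DxL m h q φ ^ 2 + DyL m h q φ ^ 2) ^ 2 :=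
        convexOn_finset_sum Finset.univ fun q _ => convexOn_normsq_sq (DxL m h q) (DyL m h q)
      simpa [smul_eq_mul, DxL, DyL] using this.smul (by positivity : (0:ℝ) ≤ A * h ^ 2)
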